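/- If an r-uniform hypergraph F has no vertex contained in every hyperedge, then ex_r(n, {F, M_{s+1}^r}) = Θ(n^{r-1}), i.e., there exist positive constants c_1, c_2 such that for all large n, c_1·n^{r-1} ≤ ex_r(n, {F, M_{s+1}^r}) ≤ c_2·n^{r-1}. -/

import Mathlib

open Finset

/-- `H` contains a matching of size `k`, i.e. `k` pairwise disjoint hyperedges. -/
def HasMatching {V : Type*} [DecidableEq V] (H : Finset (Finset V)) (k : ℕ) : Prop :=
  ∃ M : Finset (Finset V), M ⊆ H ∧ M.card = k ∧
    (M : Set (Finset V)).Pairwise fun e f => Disjoint e f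

/-- `H` contains a copy of `F`: an injective vertex map sending hyperedges to hyperedges. -/
def ContainsCopy {α V : Type*} [DecidableEq α] [DecidableEq V]
    (F : Finset (Finset α)) (H : Finset (Finset V)) : Prop :=
  ∃ f : α → V, Function.Injective f ∧ ∀ e ∈ F, e.image f ∈ H

/-- `ex_r(n, {F, M_{s+1}^r})`: the maximum number of hyperedges of an `n`-vertex
`r`-uniform hypergraph with no copy of `F` and no matching of size `s+1`. -/
noncomputable def exFM {α : Type*} [DecidableEq α]
    (F : Finset (Finset α)) (r s n : ℕ) : ℕ :=
  sSup {m | ∃ H : Finset (Finset (Fin n)), (∀ e ∈ H, e.card = r) ∧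
    ¬ ContainsCopy F H ∧ ¬ HasMatching H (s + 1) ∧ H.card = m}

lemma exFM_bddAbove {α : Type*} [DecidableEq α] (F : Finset (Finset α)) (r s n : ℕ) :
    BddAbove {m | ∃ H : Finset (Finset (Fin n)), (∀ e ∈ H, e.card = r) ∧
      ¬ ContainsCopy F H ∧ ¬ HasMatching H (s + 1) ∧ H.card = m} := by
  refine ⟨2 ^ n, ?_⟩
  rintro m ⟨H, -, -, -, rfl⟩
  have := Finset.card_le_univ H
  simpa [Fintype.card_finset] using this

lemma exFM_upper {α : Type*} [DecidableEq α] (F : Finset (Finset α)) (r s n : ℕ)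
    (hr : 1 ≤ r) (hFne : F.Nonempty) :
    exFM F r s n ≤ s * r * n ^ (r - 1) := by
  classical
  apply csSup_le
  · refine ⟨0, ∅, by simp, ?_, ?_, by simp⟩
    · rintro ⟨f, -, hmem⟩
      obtain ⟨e0, he0⟩ := hFne
      simpa using hmem e0 he0
    · rintro ⟨M, hM, hcard, -⟩
      have : M = ∅ := Finset.subset_empty.mp hM
      simp [this] at hcard
  rintro m ⟨H, hunif, -, hmatch, rfl⟩
  -- take a matching M of maximum cardinality
  set 𝓜 := H.powerset.filter
    (fun M : Finset (Finset (Fin n)) =>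
      (↑M : Set (Finset (Fin n))).Pairwise fun e f => Disjoint e f) with h𝓜
  have hemp : ∅ ∈ 𝓜 := by simp [h𝓜]
  obtain ⟨M, hM𝓜, hMmax⟩ := 𝓜.exists_max_image Finset.card ⟨∅, hemp⟩
  rw [h𝓜, mem_filter, mem_powerset] at hM𝓜
  obtain ⟨hMH, hMdisj⟩ := hM𝓜
  have hMcard : M.card ≤ s := by
    by_contra h
    push_neg at h
    obtain ⟨M', hM'M, hM'card⟩ := Finset.exists_subset_card_eq (show s + 1 ≤ M.card from h)
    exact hmatch ⟨M', hM'M.trans hMH, hM'card,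
      hMdisj.mono (Finset.coe_subset.mpr hM'M)⟩
  set S := M.biUnion id with hS
  have hScard : S.card ≤ s * r := by
    calc S.card ≤ ∑ e ∈ M, e.card := Finset.card_biUnion_le
      _ = ∑ _e ∈ M, r := by
          apply Finset.sum_congr rfl
          intro e he; exact hunif e (hMH he)
      _ = M.card * r := by rw [Finset.sum_const, smul_eq_mul]
      _ ≤ s * r := Nat.mul_le_mul_right r hMcard
  -- every edge meets S
  have hmeet : ∀ e ∈ H, ∃ v ∈ e, v ∈ S := by
    intro e he
    by_contra hcon
    push_neg at hcon
    have heM : e ∉ M := by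
      intro heM
      have hne : e.Nonempty := Finset.card_pos.mp (by rw [hunif e he]; omega)
      obtain ⟨v, hv⟩ := hne
      exact hcon v hv (Finset.mem_biUnion.mpr ⟨e, heM, hv⟩)
    have hdisj : ∀ f ∈ M, Disjoint e f := by
      intro f hf
      rw [Finset.disjoint_left]
      intro v hv hvf
      exact hcon v hv (Finset.mem_biUnion.mpr ⟨f, hf, hvf⟩)
    have hins : insert e M ∈ 𝓜 := by
      rw [h𝓜, mem_filter, mem_powerset]
      refine ⟨Finset.insert_subset he hMH, ?_⟩
      rw [Finset.coe_insert]
      apply hMdisj.insert_of_symmetric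
      · intro f hf _; exact hdisj f hf
    have := hMmax _ hins
    rw [Finset.card_insert_of_notMem heM] at this
    omega
  -- count edges through each vertex of S
  have hcount : ∀ v : Fin n, (H.filter fun e => v ∈ e).card ≤ n ^ (r - 1) := by
    intro v
    have hinj : Set.InjOn (fun e : Finset (Fin n) => e.erase v) ↑(H.filter fun e => v ∈ e) := by
      intro e1 h1 e2 h2 h
      simp only [Finset.coe_filter, Set.mem_setOf_eq] at h1 h2
      have h' : e1.erase v = e2.erase v := h
      rw [← Finset.insert_erase h1.2, ← Finset.insert_erase h2.2, h']
    have himg : ((H.filter fun e => v ∈ e).image fun e => e.erase v) ⊆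
        (univ : Finset (Fin n)).powersetCard (r - 1) := by
      intro t ht
      obtain ⟨e, he, rfl⟩ := Finset.mem_image.mp ht
      rw [Finset.mem_filter] at he
      rw [Finset.mem_powersetCard]
      refine ⟨Finset.subset_univ _, ?_⟩
      rw [Finset.card_erase_of_mem he.2, hunif e he.1]
    calc (H.filter fun e => v ∈ e).card
        = ((H.filter fun e => v ∈ e).image fun e => e.erase v).card :=
          (Finset.card_image_of_injOn hinj).symm
      _ ≤ ((univ : Finset (Fin n)).powersetCard (r - 1)).card := Finset.card_le_card himg
      _ = n.choose (r - 1) := by rw [Finset.card_powersetCard, Finset.card_univ, Fintype.card_fin]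
      _ ≤ n ^ (r - 1) := Nat.choose_le_pow n (r - 1)
  calc H.card ≤ (S.biUnion fun v => H.filter fun e => v ∈ e).card := by
        apply Finset.card_le_card
        intro e he
        obtain ⟨v, hve, hvS⟩ := hmeet e he
        exact Finset.mem_biUnion.mpr ⟨v, hvS, Finset.mem_filter.mpr ⟨he, hve⟩⟩
    _ ≤ ∑ v ∈ S, (H.filter fun e => v ∈ e).card := Finset.card_biUnion_le
    _ ≤ ∑ _v ∈ S, n ^ (r - 1) := Finset.sum_le_sum fun v _ => hcount v
    _ = S.card * n ^ (r - 1) := by rw [Finset.sum_const, smul_eq_mul]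
    _ ≤ s * r * n ^ (r - 1) := Nat.mul_le_mul_right _ hScard

lemma exFM_lower {α : Type*} [DecidableEq α] (F : Finset (Finset α)) (r s n : ℕ)
    (hr : 1 ≤ r) (hs : 1 ≤ s) (hn : 1 ≤ n) (hFne : F.Nonempty)
    (hcover : ∀ v : α, ∃ e ∈ F, v ∉ e) :
    (n - 1).choose (r - 1) ≤ exFM F r s n := by
  classical
  have hn0 : 0 < n := hn
  set v0 : Fin n := ⟨0, hn0⟩ with hv0
  set H : Finset (Finset (Fin n)) :=
    (((univ : Finset (Fin n)).erase v0).powersetCard (r - 1)).image (insert v0) with hH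
  -- basic structure of members of H
  have hmem : ∀ e ∈ H, v0 ∈ e ∧ e.card = r := by
    intro e he
    rw [hH, Finset.mem_image] at he
    obtain ⟨t, ht, rfl⟩ := he
    rw [Finset.mem_powersetCard] at ht
    have hv0t : v0 ∉ t := fun h => (Finset.mem_erase.mp (ht.1 h)).1 rfl
    refine ⟨Finset.mem_insert_self _ _, ?_⟩
    rw [Finset.card_insert_of_notMem hv0t, ht.2]
    omega
  have hcard : H.card = (n - 1).choose (r - 1) := by
    rw [hH, Finset.card_image_of_injOn, Finset.card_powersetCard,
      Finset.card_erase_of_mem (Finset.mem_univ _), Finset.card_univ, Fintype.card_fin]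
    intro t1 h1 t2 h2 h
    obtain ⟨hs1, -⟩ := Finset.mem_powersetCard.mp (Finset.mem_coe.mp h1)
    obtain ⟨hs2, -⟩ := Finset.mem_powersetCard.mp (Finset.mem_coe.mp h2)
    have hv1 : v0 ∉ t1 := fun hx => (Finset.mem_erase.mp (hs1 hx)).1 rfl
    have hv2 : v0 ∉ t2 := fun hx => (Finset.mem_erase.mp (hs2 hx)).1 rfl
    have h' : insert v0 t1 = insert v0 t2 := h
    rw [← Finset.erase_insert hv1, ← Finset.erase_insert hv2, h']
  apply le_csSup (exFM_bddAbove F r s n)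
  refine ⟨H, fun e he => (hmem e he).2, ?_, ?_, hcard⟩
  · -- no copy of F
    rintro ⟨f, hfinj, hf⟩
    obtain ⟨e0, he0⟩ := hFne
    have h0 : v0 ∈ e0.image f := (hmem _ (hf e0 he0)).1
    obtain ⟨u, _, hu⟩ := Finset.mem_image.mp h0
    obtain ⟨e, heF, hue⟩ := hcover u
    have h1 : v0 ∈ e.image f := (hmem _ (hf e heF)).1
    obtain ⟨u', hu'e, hu'⟩ := Finset.mem_image.mp h1
    have : u' = u := hfinj (by rw [hu, hu'])
    exact hue (this ▸ hu'e)
  · -- no matching of size s+1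
    rintro ⟨M, hMH, hMcard, hMdisj⟩
    have h2 : 1 < M.card := by omega
    obtain ⟨a, ha, b, hb, hab⟩ := Finset.one_lt_card.mp h2
    have hdab : Disjoint a b := hMdisj ha hb hab
    have hva : v0 ∈ a := (hmem a (hMH ha)).1
    have hvb : v0 ∈ b := (hmem b (hMH hb)).1
    exact Finset.disjoint_left.mp hdab hva hvb

/-- If no vertex of `F` lies in every hyperedge, then
`ex_r(n, {F, M_{s+1}^r}) = Θ(n^{r-1})`. -/
theorem stmt_6 {α : Type*} [Fintype α] [DecidableEq α] (r s : ℕ) (hr : 1 ≤ r) (hs : 1 ≤ s)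
    (F : Finset (Finset α)) (hFne : F.Nonempty) (hF : ∀ e ∈ F, e.card = r)
    (hcover : ∀ v : α, ∃ e ∈ F, v ∉ e) :
    ∃ c₁ c₂ : ℝ, 0 < c₁ ∧ 0 < c₂ ∧ ∃ n0 : ℕ, ∀ n ≥ n0,
      c₁ * (n : ℝ) ^ (r - 1) ≤ (exFM F r s n : ℝ) ∧
      (exFM F r s n : ℝ) ≤ c₂ * (n : ℝ) ^ (r - 1) := by
  classical
  have hfac : (0 : ℝ) < (r - 1).factorial := by exact_mod_cast (r - 1).factorial_pos
  refine ⟨(((r - 1).factorial : ℝ) * 2 ^ (r - 1))⁻¹, (s : ℝ) * r, by positivity, ?_, 2 * r, ?_⟩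
  · have : (0 : ℝ) < s := by exact_mod_cast hs
    have : (0 : ℝ) < r := by exact_mod_cast hr
    positivity
  intro n hn
  have hnr : r ≤ n := by omega
  have hn1 : 1 ≤ n := by omega
  constructor
  · -- lower bound
    have key : ((n - 1).choose (r - 1) : ℝ) ≤ (exFM F r s n : ℝ) := by
      exact_mod_cast exFM_lower F r s n hr hs hn1 hFne hcover
    refine le_trans ?_ key
    have h1 : (((n - 1) + 1 - (r - 1) : ℕ) ^ (r - 1) : ℝ) / (r - 1).factorial ≤
        ((n - 1).choose (r - 1) : ℝ) := Nat.pow_le_choose (r - 1) (n - 1)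
    have harith : (n - 1) + 1 - (r - 1) = n - r + 1 := by omega
    rw [harith] at h1
    refine le_trans ?_ h1
    have hcast : ((n - r + 1 : ℕ) : ℝ) = (n : ℝ) - r + 1 := by
      push_cast [Nat.cast_sub hnr]
      ring
    have h2r : (2 * r : ℝ) ≤ n := by exact_mod_cast hn
    have hle : (n : ℝ) ≤ 2 * ((n - r + 1 : ℕ) : ℝ) := by rw [hcast]; linarith
    have hmain : (n : ℝ) ^ (r - 1) ≤ 2 ^ (r - 1) * ((n - r + 1 : ℕ) : ℝ) ^ (r - 1) := by
      calc (n : ℝ) ^ (r - 1) ≤ (2 * ((n - r + 1 : ℕ) : ℝ)) ^ (r - 1) :=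
            pow_le_pow_left₀ (Nat.cast_nonneg n) hle _
        _ = 2 ^ (r - 1) * ((n - r + 1 : ℕ) : ℝ) ^ (r - 1) := mul_pow _ _ _
    rw [inv_mul_eq_div, div_le_div_iff₀ (by positivity) hfac]
    nlinarith [hmain, hfac.le, pow_nonneg (Nat.cast_nonneg (n - r + 1) : (0:ℝ) ≤ _) (r - 1)]
  · -- upper bound
    have key : (exFM F r s n : ℝ) ≤ ((s * r * n ^ (r - 1) : ℕ) : ℝ) := by
      exact_mod_cast exFM_upper F r s n hr hFne
    refine key.trans_eq ?_
    push_cast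
    ring
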